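/- Let r ≥ 1, let R, D ⊆ {1,…,n−1}, and let σ ∈ S_n. For Z = (z^1,…,z^n) ∈ (ℕ^r)^n write Z^{(2)} ∈ (ℕ^{r−1})^n for the list obtained by deleting the first coordinate of each z^i. Then, as formal power series in q_1,…,q_r: (q_r;q_r)_n · Σ_{Z ∈ (ℕ^r)^n with σ_R(Z) = σ and Des_{R,Z^{(2)}}(σ) = D} q^Z = q_r^{c(D)} · Σ_{S ∈ (ℕ^{r−1})^n with Des_{R,S}(σ) = D} q^S, where c(D) = Σ_{i ∈ D} (n − i) and q^S is a monomial in q_1,…,q_{r−1} only. -/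

import Mathlib

open scoped Classical

namespace RomeroComaj

noncomputable section

/-- `Seq r` is `ℕ^r`, the type of sequences of natural numbers of length `r`. -/
abbrev Seq (r : ℕ) := Fin r → ℕ

/-- strict lexicographic order on `ℕ^r`. -/
def lexLt {r : ℕ} (a b : Seq r) : Prop :=
  ∃ i : Fin r, (∀ j : Fin r, j < i → a j = b j) ∧ a i < b i

/-- weak lexicographic order on `ℕ^r`. -/
def lexLe {r : ℕ} (a b : Seq r) : Prop :=
  lexLt a b ∨ a = b

/-- `RNbr R a b` : the (1-indexed) indices `a` and `b` are `R`-neighbors,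
i.e. (for `a < b`) all of `a, a+1, …, b-1` lie in `R`. -/
def RNbr (R : Finset ℕ) (a b : ℕ) : Prop :=
  ∀ t ∈ Finset.Ico (min a b) (max a b), t ∈ R

/-- the value `σ_i` of the one-line notation of `σ`, both position `i` and
the value being 1-indexed (junk value `0` outside `1 ≤ i ≤ n`). -/
def pget {n : ℕ} (σ : Equiv.Perm (Fin n)) (i : ℕ) : ℕ :=
  if h : i - 1 < n then (σ ⟨i - 1, h⟩).val + 1 else 0

/-- the sequence `s^i` of a list `S = (s^1, …, s^n)`, `i` being 1-indexed. -/
def sget {n r : ℕ} (S : Fin n → Seq r) (i : ℕ) : Seq r :=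
  if h : i - 1 < n then S ⟨i - 1, h⟩ else 0

/-- the condition for `i` to belong to `Des_{R,S}(σ)`:
`s^{σ_i} > s^{σ_{i+1}} − χ(σ_{i+1} < σ_i ∧ σ_{i+1} ≁_R σ_i) − χ(σ_{i+1} > σ_i ∧ σ_i ∼_R σ_{i+1})`. -/
def desCond {n r : ℕ} (R : Finset ℕ) (S : Fin n → Seq r) (σ : Equiv.Perm (Fin n)) (i : ℕ) :
    Prop :=
  if (pget σ (i+1) < pget σ i ∧ ¬ RNbr R (pget σ (i+1)) (pget σ i)) ∨
      (pget σ i < pget σ (i+1) ∧ RNbr R (pget σ i) (pget σ (i+1)))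
  then lexLe (sget S (pget σ (i+1))) (sget S (pget σ i))
  else lexLt (sget S (pget σ (i+1))) (sget S (pget σ i))

/-- `Des_{R,S}(σ) ⊆ {1, …, n−1}` (1-indexed positions). -/
def DesSet {n r : ℕ} (R : Finset ℕ) (S : Fin n → Seq r) (σ : Equiv.Perm (Fin n)) : Finset ℕ :=
  (Finset.Icc 1 (n-1)).filter (fun i => desCond R S σ i)

/-- `Comaj_{R,S}(σ) = ∑_{i ∈ Des_{R,S}(σ)} (n − i)`. -/
def Comaj {n r : ℕ} (R : Finset ℕ) (S : Fin n → Seq r) (σ : Equiv.Perm (Fin n)) : ℕ :=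
  ∑ i ∈ DesSet R S σ, (n - i)

/-- `s^i` is read before `s^j` in the reading order of `S` (with respect to `R`);
`i, j` are 1-indexed. -/
def readBefore {n r : ℕ} (R : Finset ℕ) (S : Fin n → Seq r) (i j : ℕ) : Prop :=
  lexLt (sget S i) (sget S j) ∨
    (sget S i = sget S j ∧ ((i < j ∧ ¬ RNbr R i j) ∨ (j < i ∧ RNbr R j i)))

/-- `IsReading R S σ` says that the reading permutation `σ_R(S)` equals `σ`,
i.e. `σ` lists `1, …, n` in the reading order of `S`. -/
def IsReading {n r : ℕ} (R : Finset ℕ) (S : Fin n → Seq r) (σ : Equiv.Perm (Fin n)) : Prop :=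
  ∀ i ∈ Finset.Icc 1 (n-1), readBefore R S (pget σ i) (pget σ (i+1))

/-- the operator `Z_{R,σ} : (ℕ^r)^n → (ℕ^{r+1})^n`, prepending to `s^v` the number of
descents of `σ` (w.r.t. `R, S`) at positions strictly before the position of `v` in `σ`. -/
def Zop {n r : ℕ} (R : Finset ℕ) (σ : Equiv.Perm (Fin n)) (S : Fin n → Seq r) :
    Fin n → Seq (r+1) :=
  fun v => Fin.cons ((DesSet R S σ ∩ Finset.Ico 1 ((σ.symm v).val + 1)).card) (S v)

/-- `Zvec R σs i = Z_{R,σ^i} ⋯ Z_{R,σ^1}(∅)` where `σ^{j+1} = σs j`. -/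
def Zvec {n : ℕ} (R : Finset ℕ) (σs : ℕ → Equiv.Perm (Fin n)) : (i : ℕ) → Fin n → Seq i
  | 0 => fun _ => (0 : Seq 0)
  | (i+1) => Zop R (σs i) (Zvec R σs i)

/-- extend a finite vector of permutations to `ℕ`, by the identity. -/
def extFun {n r : ℕ} (σv : Fin r → Equiv.Perm (Fin n)) : ℕ → Equiv.Perm (Fin n) :=
  fun j => if h : j < r then σv ⟨j, h⟩ else 1

/-- `comajI R k σv i = comaj^i_R(σ⃗)` for `1 ≤ i ≤ k`, where `σ⃗ = σv` has length `k−1`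
and `σ^k = ε`. -/
def comajI {n : ℕ} (R : Finset ℕ) (k : ℕ) (σv : Fin (k-1) → Equiv.Perm (Fin n)) (i : ℕ) : ℕ :=
  Comaj R (Zvec R (extFun σv) (i-1)) (extFun σv (i-1))

/-- the exponent of the monomial `q^S` for `S ∈ (ℕ^r)^n` : the (0-indexed) variable `i`
(that is, `q_{i+1}`) records the `(r−i)`-th (0-indexed: `r−1−i`-th) coordinates. -/
def expOf {n r : ℕ} (S : Fin n → Seq r) : Fin r →₀ ℕ :=
  Finsupp.equivFunOnFinite.symm (fun i => ∑ j : Fin n, S j (Fin.rev i))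

/-- the formal power series whose coefficient at a monomial `d` counts the elements
`a : α` satisfying `P a d`. -/
def countSeriesP {σty α : Type*} (P : α → (σty →₀ ℕ) → Prop) : MvPowerSeries σty ℤ :=
  fun d => (Nat.card {a : α // P a d} : ℤ)

/-- `∑_{S ∈ (ℕ^r)^n, P S} q^S`. -/
def countSeries {n r : ℕ} (P : (Fin n → Seq r) → Prop) : MvPowerSeries (Fin r) ℤ :=
  countSeriesP (fun S d => P S ∧ expOf S = d)

/-- the Pochhammer factor `(q_i; q_i)_n = ∏_{j=1}^n (1 − q_i^j)`. -/
def pochOne {r : ℕ} (n : ℕ) (i : Fin r) : MvPowerSeries (Fin r) ℤ :=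
  ∏ j ∈ Finset.Icc 1 n, (1 - (MvPowerSeries.X i : MvPowerSeries (Fin r) ℤ) ^ j)

/-- `∏_{i=1}^{r} (q_i; q_i)_n`. -/
def pochAll (n r : ℕ) : MvPowerSeries (Fin r) ℤ :=
  ∏ i : Fin r, pochOne n i

/-- the exponent of `q_1^{comaj¹_R(σ⃗)} ⋯ q_k^{comaj^k_R(σ⃗)}`. -/
def comajExp {n : ℕ} (R : Finset ℕ) (k : ℕ) (σv : Fin (k-1) → Equiv.Perm (Fin n)) :
    Fin k →₀ ℕ :=
  Finsupp.equivFunOnFinite.symm (fun i => comajI R k σv (i.val + 1))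

/-- A standard Young tableau of shape `μ` (with `μ.card` cells), recorded by the
position `pos i` of each (1-indexed) entry `i ∈ {1, …, μ.card}`; entries increase
left-to-right along rows and down columns (matrix convention), and `pos` is a
bijection from `{1, …, μ.card}` onto the cells of `μ` (normalized by `0` outside). -/
structure SYT (μ : YoungDiagram) where
  pos : ℕ → ℕ × ℕ
  mem : ∀ i ∈ Finset.Icc 1 μ.card, pos i ∈ μ
  inj : ∀ i ∈ Finset.Icc 1 μ.card, ∀ j ∈ Finset.Icc 1 μ.card, pos i = pos j → i = j
  surj : ∀ c ∈ μ, ∃ i ∈ Finset.Icc 1 μ.card, pos i = c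
  row_inc : ∀ i ∈ Finset.Icc 1 μ.card, ∀ j ∈ Finset.Icc 1 μ.card,
    (pos i).1 = (pos j).1 → (pos i).2 < (pos j).2 → i < j
  col_inc : ∀ i ∈ Finset.Icc 1 μ.card, ∀ j ∈ Finset.Icc 1 μ.card,
    (pos i).2 = (pos j).2 → (pos i).1 < (pos j).1 → i < j
  junk : ∀ i, i ∉ Finset.Icc 1 μ.card → pos i = 0

/-- `des(T)` : the set of `i ∈ {1, …, n−1}` such that `i+1` lies in a strictly
higher row of `T` than `i` (in matrix convention: a strictly larger row index). -/
def desSYT {μ : YoungDiagram} (T : SYT μ) : Finset ℕ :=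
  (Finset.Icc 1 (μ.card - 1)).filter (fun i => (T.pos i).1 < (T.pos (i+1)).1)

/-- the ordinary descent set `des(π) = {i : π_i > π_{i+1}}` (1-indexed). -/
def desPerm {n : ℕ} (π : Equiv.Perm (Fin n)) : Finset ℕ :=
  (Finset.Icc 1 (n-1)).filter (fun i => pget π (i+1) < pget π i)

/-- `comaj(π) = ∑_{i ∈ des(π)} (n − i)`. -/
def comajP {n : ℕ} (π : Equiv.Perm (Fin n)) : ℕ :=
  ∑ i ∈ desPerm π, (n - i)


/-- `Z^{(2)}` : delete the first coordinate of each sequence. -/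
def tailS {n r : ℕ} (S : Fin n → Seq (r+1)) : Fin n → Seq r :=
  fun v i => S v i.succ

/-- the exponent of the monomial `q^S` for `S ∈ (ℕ^r)^n`, viewed in the `r+1` variables
`q_1, …, q_{r+1}` (a monomial in `q_1, …, q_r` only). -/
def expTail {n r : ℕ} (S : Fin n → Seq r) : Fin (r+1) →₀ ℕ :=
  Finsupp.equivFunOnFinite.symm (fun i =>
    if h : i.val < r then ∑ j : Fin n, S j (Fin.rev ⟨i.val, h⟩) else 0)

section Aux

open MvPowerSeries

/-! ### Lexicographic order facts -/

lemma lexLt_trans {r : ℕ} {a b c : Seq r} (h1 : lexLt a b) (h2 : lexLt b c) : lexLt a c := by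
  obtain ⟨i, hi, hlt⟩ := h1
  obtain ⟨j, hj, hlt'⟩ := h2
  rcases lt_trichotomy i j with H | rfl | H
  · exact ⟨i, fun k hk => (hi k hk).trans (hj k (hk.trans H)),
      by rw [← hj i H]; exact hlt⟩
  · exact ⟨i, fun k hk => (hi k hk).trans (hj k hk), hlt.trans hlt'⟩
  · exact ⟨j, fun k hk => (hi k (hk.trans H)).trans (hj k hk),
      by rw [hi j H]; exact hlt'⟩

lemma lexLt_irrefl {r : ℕ} (a : Seq r) : ¬ lexLt a a := fun ⟨_, _, h⟩ => lt_irrefl _ h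

lemma lexLt_trichotomy {r : ℕ} (a b : Seq r) : lexLt a b ∨ a = b ∨ lexLt b a := by
  rcases eq_or_ne a b with rfl | hab
  · exact Or.inr (Or.inl rfl)
  · rw [Function.ne_iff] at hab
    have wf : WellFounded ((· < ·) : Fin r → Fin r → Prop) := IsWellFounded.wf
    have hne : a (wf.min _ hab) ≠ b (wf.min _ hab) := wf.min_mem _ hab
    have hri : ∀ j, j < wf.min _ hab → a j = b j := by
      intro j
      rw [← not_imp_not]
      exact fun h' => wf.not_lt_min _ h'
    rcases lt_trichotomy (a (wf.min _ hab)) (b (wf.min _ hab)) with h | h | h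
    · exact Or.inl ⟨_, hri, h⟩
    · exact absurd h hne
    · exact Or.inr (Or.inr ⟨_, fun j hj => (hri j hj).symm, h⟩)

lemma not_lexLe {r : ℕ} {a b : Seq r} : ¬ lexLe b a ↔ lexLt a b := by
  constructor
  · intro h
    rcases lexLt_trichotomy a b with h1 | h1 | h1
    · exact h1
    · exact absurd (Or.inr h1.symm) h
    · exact absurd (Or.inl h1) h
  · rintro h (h' | rfl)
    · exact lexLt_irrefl _ (lexLt_trans h h')
    · exact lexLt_irrefl _ h

lemma not_lexLt {r : ℕ} {a b : Seq r} : ¬ lexLt b a ↔ lexLe a b := by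
  constructor
  · intro h
    rcases lexLt_trichotomy a b with h1 | h1 | h1
    · exact Or.inl h1
    · exact Or.inr h1
    · exact absurd h1 h
  · rintro (h | rfl) h'
    · exact lexLt_irrefl _ (lexLt_trans h h')
    · exact lexLt_irrefl _ h'

lemma lexLt_cons_iff {r : ℕ} {u v : Seq (r+1)} :
    lexLt u v ↔ u 0 < v 0 ∨ (u 0 = v 0 ∧
      lexLt (fun k : Fin r => u k.succ) (fun k : Fin r => v k.succ)) := by
  constructor
  · rintro ⟨i, hi, hlt⟩
    rcases Fin.eq_zero_or_eq_succ i with rfl | ⟨k, rfl⟩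
    · exact Or.inl hlt
    · exact Or.inr ⟨hi 0 (Fin.succ_pos k),
        ⟨k, fun j hj => hi j.succ (Fin.succ_lt_succ_iff.mpr hj), hlt⟩⟩
  · rintro (h | ⟨h0, ⟨k, hk, hlt⟩⟩)
    · exact ⟨0, fun j hj => absurd hj (by simp), h⟩
    · refine ⟨k.succ, ?_, hlt⟩
      intro j hj
      rcases Fin.eq_zero_or_eq_succ j with rfl | ⟨m, rfl⟩
      · exact h0
      · exact hk m (Fin.succ_lt_succ_iff.mp hj)

lemma seq_eq_iff {r : ℕ} {u v : Seq (r+1)} :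
    u = v ↔ u 0 = v 0 ∧ (fun k : Fin r => u k.succ) = (fun k : Fin r => v k.succ) := by
  constructor
  · rintro rfl; exact ⟨rfl, rfl⟩
  · rintro ⟨h0, ht⟩
    funext j
    rcases Fin.eq_zero_or_eq_succ j with rfl | ⟨k, rfl⟩
    · exact h0
    · exact congrFun ht k

/-! ### `pget`/`sget` basics -/

lemma pget_eq {n : ℕ} (σ : Equiv.Perm (Fin n)) {i : ℕ} (h : i - 1 < n) :
    pget σ i = (σ ⟨i - 1, h⟩).val + 1 := dif_pos h

lemma sget_pget {n r : ℕ} (S : Fin n → Seq r) (σ : Equiv.Perm (Fin n)) {i : ℕ}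
    (h : i - 1 < n) : sget S (pget σ i) = S (σ ⟨i - 1, h⟩) := by
  rw [pget_eq σ h]
  unfold sget
  simp only [Nat.add_sub_cancel]
  rw [dif_pos (σ ⟨i - 1, h⟩).isLt]

/-! ### descents vs reading order -/

lemma readBefore_iff_not_desCond {n r : ℕ} (R : Finset ℕ) (S : Fin n → Seq r)
    (σ : Equiv.Perm (Fin n)) {i : ℕ} (h1 : 1 ≤ i) (h2 : i ≤ n - 1) (hn : 1 ≤ n) :
    readBefore R S (pget σ i) (pget σ (i+1)) ↔ ¬ desCond R S σ i := by
  have hi1 : i - 1 < n := by omega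
  have hi2 : i < n := by omega
  have hxy : pget σ i ≠ pget σ (i+1) := by
    rw [pget_eq σ hi1, pget_eq σ (i := i+1) hi2]
    intro hEq
    have he1 : σ ⟨i - 1, hi1⟩ = σ ⟨i + 1 - 1, hi2⟩ := Fin.ext (by omega)
    have he2 := congrArg Fin.val (σ.injective he1)
    simp only [] at he2
    omega
  unfold readBefore desCond
  split_ifs with hA
  · have hBfalse : ¬ ((pget σ i < pget σ (i+1) ∧ ¬ RNbr R (pget σ i) (pget σ (i+1))) ∨
        (pget σ (i+1) < pget σ i ∧ RNbr R (pget σ (i+1)) (pget σ i))) := by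
      rcases hA with ⟨h, hr⟩ | ⟨h, hr⟩
      · rintro (⟨h', _⟩ | ⟨_, hr'⟩)
        · omega
        · exact hr hr'
      · rintro (⟨_, hr'⟩ | ⟨h', _⟩)
        · exact hr' hr
        · omega
    constructor
    · rintro (h | ⟨_, hB⟩)
      · exact not_lexLe.mpr h
      · exact absurd hB hBfalse
    · intro h
      exact Or.inl (not_lexLe.mp h)
  · have hB : (pget σ i < pget σ (i+1) ∧ ¬ RNbr R (pget σ i) (pget σ (i+1))) ∨
        (pget σ (i+1) < pget σ i ∧ RNbr R (pget σ (i+1)) (pget σ i)) := by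
      rcases Nat.lt_or_ge (pget σ i) (pget σ (i+1)) with h | h
      · exact Or.inl ⟨h, fun hr => hA (Or.inr ⟨h, hr⟩)⟩
      · have h' : pget σ (i+1) < pget σ i := by
          rcases Nat.lt_or_ge (pget σ (i+1)) (pget σ i) with h'' | h''
          · exact h''
          · exact absurd (Nat.le_antisymm h'' h) hxy
        exact Or.inr ⟨h', Classical.byContradiction fun hc => hA (Or.inl ⟨h', hc⟩)⟩
    constructor
    · rintro (h | ⟨he, _⟩)
      · exact not_lexLt.mpr (Or.inl h)
      · exact not_lexLt.mpr (Or.inr he)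
    · intro h
      rcases not_lexLt.mp h with h' | h'
      · exact Or.inl h'
      · exact Or.inr ⟨h', hB⟩

end Aux

/-! ### heads and the core characterization -/

def heads {n r : ℕ} (σ : Equiv.Perm (Fin n)) (Z : Fin n → Seq (r+1)) : Fin n → ℕ :=
  fun i => Z (σ i) 0

def HeadCond (n : ℕ) (D : Finset ℕ) (h : Fin n → ℕ) : Prop :=
  ∀ (i : ℕ) (h1 : i < n) (h2 : i + 1 < n),
    h ⟨i, h1⟩ + (if i + 1 ∈ D then 1 else 0) ≤ h ⟨i + 1, h2⟩

lemma read_iff_head {n r : ℕ} (R : Finset ℕ) (σ : Equiv.Perm (Fin n)) (Z : Fin n → Seq (r+1))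
    {p : ℕ} (hp1 : 1 ≤ p) (hp2 : p ≤ n - 1) (hn : 1 ≤ n) (hq1 : p - 1 < n) (hq2 : p < n) :
    readBefore R Z (pget σ p) (pget σ (p+1)) ↔
      (Z (σ ⟨p - 1, hq1⟩) 0 < Z (σ ⟨p, hq2⟩) 0 ∨
        (Z (σ ⟨p - 1, hq1⟩) 0 = Z (σ ⟨p, hq2⟩) 0 ∧ ¬ desCond R (tailS Z) σ p)) := by
  have e1 : sget Z (pget σ p) = Z (σ ⟨p - 1, hq1⟩) := sget_pget Z σ hq1
  have e2 : sget Z (pget σ (p+1)) = Z (σ ⟨p, hq2⟩) := sget_pget Z σ (i := p+1) hq2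
  have hnd : ¬ desCond R (tailS Z) σ p ↔
      readBefore R (tailS Z) (pget σ p) (pget σ (p+1)) :=
    (readBefore_iff_not_desCond R (tailS Z) σ hp1 hp2 hn).symm
  rw [hnd]
  unfold readBefore
  rw [e1, e2, sget_pget (tailS Z) σ hq1, sget_pget (tailS Z) σ (i := p+1) hq2,
    lexLt_cons_iff, seq_eq_iff]
  simp only [Nat.add_sub_cancel]
  simp only [show (fun k : Fin r => Z (σ ⟨p - 1, hq1⟩) k.succ) = tailS Z (σ ⟨p - 1, hq1⟩)
      from rfl,
    show (fun k : Fin r => Z (σ ⟨p, hq2⟩) k.succ) = tailS Z (σ ⟨p, hq2⟩) from rfl]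
  tauto

lemma core_iff {n r : ℕ} (hn : 1 ≤ n) (R D : Finset ℕ) (σ : Equiv.Perm (Fin n))
    (Z : Fin n → Seq (r+1)) :
    (IsReading R Z σ ∧ DesSet R (tailS Z) σ = D) ↔
      (DesSet R (tailS Z) σ = D ∧ HeadCond n D (heads σ Z)) := by
  constructor
  · rintro ⟨hread, hdes⟩
    refine ⟨hdes, ?_⟩
    intro i h1 h2
    have hp := hread (i+1) (Finset.mem_Icc.mpr ⟨by omega, by omega⟩)
    rw [read_iff_head R σ Z (by omega) (by omega) hn (by omega) (by omega)] at hp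
    simp only [Nat.add_sub_cancel] at hp
    by_cases hD : i + 1 ∈ D
    · have hdc : desCond R (tailS Z) σ (i+1) := by
        rw [← hdes] at hD
        exact (Finset.mem_filter.mp hD).2
      rcases hp with h | ⟨_, hnd⟩
      · simp only [if_pos hD]
        exact h
      · exact absurd hdc hnd
    · simp only [if_neg hD, add_zero]
      rcases hp with h | ⟨he, _⟩
      · exact le_of_lt h
      · exact le_of_eq he
  · rintro ⟨hdes, hhc⟩
    refine ⟨?_, hdes⟩
    intro p hp
    rw [Finset.mem_Icc] at hp
    rw [read_iff_head R σ Z hp.1 hp.2 hn (by omega) (by omega)]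
    have hkey := hhc (p-1) (by omega) (by omega)
    have hpe : p - 1 + 1 = p := by omega
    simp only [hpe] at hkey
    by_cases hD : p ∈ D
    · left
      rw [if_pos hD] at hkey
      exact hkey
    · rw [if_neg hD, add_zero] at hkey
      rcases eq_or_lt_of_le hkey with he | hlt
      · right
        refine ⟨he, ?_⟩
        intro hdc
        rw [← hdes] at hD
        exact hD (Finset.mem_filter.mpr ⟨Finset.mem_Icc.mpr hp, hdc⟩)
      · left
        exact hlt

/-! ### counting series framework -/

def cnt {st α : Type*} (f : α → (st →₀ ℕ)) : MvPowerSeries st ℤ :=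
  countSeriesP (fun a d => f a = d)

lemma coeff_cnt {st α : Type*} (f : α → (st →₀ ℕ)) (d : st →₀ ℕ) :
    MvPowerSeries.coeff d (cnt f) = (Nat.card {a : α // f a = d} : ℤ) := by
  rw [MvPowerSeries.coeff_apply]
  rfl

lemma countSeriesP_eq_cnt {st α : Type*} (P : α → Prop) (f : α → (st →₀ ℕ)) :
    countSeriesP (fun a d => P a ∧ f a = d)
      = cnt (fun x : {a : α // P a} => f x.1) := by
  apply MvPowerSeries.ext
  intro d
  rw [MvPowerSeries.coeff_apply, coeff_cnt]
  show ((Nat.card {a : α // P a ∧ f a = d} : ℤ)) = _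
  have hcc : Nat.card {a : α // P a ∧ f a = d} = Nat.card {x : {a : α // P a} // f x.1 = d} :=
    Nat.card_congr
      (⟨fun x => ⟨⟨x.1, x.2.1⟩, x.2.2⟩, fun y => ⟨y.1.1, ⟨y.1.2, y.2⟩⟩,
        fun x => rfl, fun y => rfl⟩ :
        {a : α // P a ∧ f a = d} ≃ {x : {a : α // P a} // f x.1 = d})
  exact_mod_cast hcc

lemma cnt_congr {st α β : Type*} (e : α ≃ β) (f : α → (st →₀ ℕ)) (g : β → (st →₀ ℕ))
    (h : ∀ a, g (e a) = f a) : cnt f = cnt g := by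
  apply MvPowerSeries.ext
  intro d
  rw [coeff_cnt, coeff_cnt]
  exact_mod_cast Nat.card_congr (Equiv.subtypeEquiv e (fun a => by rw [h a]))

lemma monomial_mul_cnt {st α : Type*} (e0 : st →₀ ℕ) (f : α → (st →₀ ℕ)) :
    (MvPowerSeries.monomial e0 1) * cnt f = cnt (fun a => e0 + f a) := by
  apply MvPowerSeries.ext
  intro d
  rw [MvPowerSeries.coeff_monomial_mul, coeff_cnt (fun a => e0 + f a) d]
  by_cases h : e0 ≤ d
  · rw [if_pos h, coeff_cnt f (d - e0), one_mul]
    exact_mod_cast Nat.card_congr (Equiv.subtypeEquiv (Equiv.refl α) (fun a => by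
      simp only [Equiv.refl_apply]
      constructor
      · intro hh
        rw [hh]
        exact add_tsub_cancel_of_le h
      · intro hh
        exact eq_tsub_of_add_eq (by rw [add_comm]; exact hh)))
  · rw [if_neg h]
    haveI : IsEmpty {a : α // e0 + f a = d} :=
      ⟨fun x => h (x.2 ▸ self_le_add_right e0 (f x.1))⟩
    rw [Nat.card_of_isEmpty]
    simp

lemma nat_card_sigma {ι : Type*} [Fintype ι] (f : ι → Type*) [∀ i, Finite (f i)] :
    Nat.card ((i : ι) × f i) = ∑ i, Nat.card (f i) := by
  classical
  letI : ∀ i, Fintype (f i) := fun i => Fintype.ofFinite _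
  rw [Nat.card_eq_fintype_card, Fintype.card_sigma]
  exact Finset.sum_congr rfl fun i _ => (Nat.card_eq_fintype_card).symm

lemma cnt_mul_cnt {st α β : Type*} (f : α → st →₀ ℕ) (g : β → st →₀ ℕ)
    (hf : ∀ d, Finite {a : α // f a = d}) (hg : ∀ d, Finite {b : β // g b = d}) :
    cnt f * cnt g = cnt (fun x : α × β => f x.1 + g x.2) := by
  classical
  apply MvPowerSeries.ext
  intro d
  rw [MvPowerSeries.coeff_mul, coeff_cnt]
  have e : {x : α × β // f x.1 + g x.2 = d} ≃
      (p : {p : (st →₀ ℕ) × (st →₀ ℕ) // p ∈ Finset.HasAntidiagonal.antidiagonal d}) ×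
        ({a : α // f a = p.1.1} × {b : β // g b = p.1.2}) :=
    { toFun := fun x => ⟨⟨(f x.1.1, g x.1.2), Finset.HasAntidiagonal.mem_antidiagonal.mpr x.2⟩,
        ⟨⟨x.1.1, rfl⟩, ⟨x.1.2, rfl⟩⟩⟩
      invFun := fun y => ⟨(y.2.1.1, y.2.2.1), by
        rw [y.2.1.2, y.2.2.2]
        exact Finset.HasAntidiagonal.mem_antidiagonal.mp y.1.2⟩
      left_inv := fun x => rfl
      right_inv := by
        rintro ⟨⟨⟨p1, p2⟩, hp⟩, ⟨a, ha⟩, ⟨b, hb⟩⟩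
        obtain rfl : f a = p1 := ha
        obtain rfl : g b = p2 := hb
        rfl }
  have key : ∑ p ∈ Finset.HasAntidiagonal.antidiagonal d,
      Nat.card {a : α // f a = p.1} * Nat.card {b : β // g b = p.2}
      = Nat.card {x : α × β // f x.1 + g x.2 = d} := by
    rw [← Finset.sum_coe_sort (Finset.HasAntidiagonal.antidiagonal d)
      (fun p => Nat.card {a : α // f a = p.1} * Nat.card {b : β // g b = p.2})]
    haveI : ∀ p : {p : (st →₀ ℕ) × (st →₀ ℕ) // p ∈ Finset.HasAntidiagonal.antidiagonal d},
        Finite ({a : α // f a = p.1.1} × {b : β // g b = p.1.2}) := fun p => by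
      haveI := hf p.1.1
      haveI := hg p.1.2
      infer_instance
    calc ∑ p : {p : (st →₀ ℕ) × (st →₀ ℕ) // p ∈ Finset.HasAntidiagonal.antidiagonal d},
          Nat.card {a : α // f a = p.1.1} * Nat.card {b : β // g b = p.1.2}
        = ∑ p : {p : (st →₀ ℕ) × (st →₀ ℕ) // p ∈ Finset.HasAntidiagonal.antidiagonal d},
            Nat.card ({a : α // f a = p.1.1} × {b : β // g b = p.1.2}) :=
          Finset.sum_congr rfl fun p _ => (Nat.card_prod _ _).symm
      _ = Nat.card ((p : {p : (st →₀ ℕ) × (st →₀ ℕ) // p ∈ Finset.HasAntidiagonal.antidiagonal d}) ×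
            ({a : α // f a = p.1.1} × {b : β // g b = p.1.2})) :=
          (nat_card_sigma _).symm
      _ = Nat.card {x : α × β // f x.1 + g x.2 = d} := (Nat.card_congr e).symm
  rw [← key]
  push_cast
  exact Finset.sum_congr rfl fun p _ => by rw [coeff_cnt, coeff_cnt]

lemma cnt_one {st α : Type*} [Unique α] : cnt (fun _ : α => (0 : st →₀ ℕ)) = 1 := by
  classical
  apply MvPowerSeries.ext
  intro d
  rw [coeff_cnt, MvPowerSeries.coeff_one]
  by_cases h : d = 0
  · subst h
    rw [if_pos rfl]
    haveI : Nonempty {a : α // (0 : st →₀ ℕ) = 0} := ⟨⟨default, rfl⟩⟩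
    exact_mod_cast Nat.card_unique
  · rw [if_neg h]
    haveI : IsEmpty {a : α // (0 : st →₀ ℕ) = d} := ⟨fun x => h x.2.symm⟩
    rw [Nat.card_of_isEmpty]
    simp

lemma cnt_add_split {st α β γ : Type*} (f : α → st →₀ ℕ) (g : β → st →₀ ℕ) (h : γ → st →₀ ℕ)
    (E : ∀ d, {a : α // f a = d} ≃ ({b : β // g b = d} ⊕ {c : γ // h c = d}))
    (hgf : ∀ d, Finite {b : β // g b = d}) (hhf : ∀ d, Finite {c : γ // h c = d}) :
    cnt f = cnt g + cnt h := by
  apply MvPowerSeries.ext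
  intro d
  rw [map_add, coeff_cnt, coeff_cnt, coeff_cnt]
  rw [show ((Nat.card {a : α // f a = d} : ℤ)) = ((Nat.card ({b : β // g b = d} ⊕ {c : γ // h c = d}) : ℤ)) from congrArg _ (Nat.card_congr (E d))]
  haveI := hgf d
  haveI := hhf d
  exact_mod_cast (@Nat.card_sum {b : β // g b = d} {c : γ // h c = d} _ _)

/-! ### finiteness of fibers -/

lemma finite_pi_of_bound {ι κ : Type*} [Finite ι] [Finite κ] (p : (ι → κ → ℕ) → Prop)
    (B : ℕ) (hb : ∀ g, p g → ∀ i j, g i j ≤ B) : Finite {g : ι → κ → ℕ // p g} := by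
  have hinj : Function.Injective (fun (x : {g : ι → κ → ℕ // p g}) =>
      (fun i j => (⟨x.1 i j, Nat.lt_succ_of_le (hb x.1 x.2 i j)⟩ : Fin (B+1)))) := by
    intro x y hxy
    apply Subtype.ext
    funext i j
    exact congrArg Fin.val (congrFun (congrFun hxy i) j)
  exact Finite.of_injective _ hinj

lemma finite_fun_of_bound {ι : Type*} [Finite ι] (p : (ι → ℕ) → Prop)
    (B : ℕ) (hb : ∀ g, p g → ∀ i, g i ≤ B) : Finite {g : ι → ℕ // p g} := by
  have hinj : Function.Injective (fun (x : {g : ι → ℕ // p g}) =>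
      (fun i => (⟨x.1 i, Nat.lt_succ_of_le (hb x.1 x.2 i)⟩ : Fin (B+1)))) := by
    intro x y hxy
    apply Subtype.ext
    funext i
    exact congrArg Fin.val (congrFun hxy i)
  exact Finite.of_injective _ hinj

lemma finite_fiber_sub {α st : Type*} (P : α → Prop) (f : α → st →₀ ℕ) (d : st →₀ ℕ)
    [Finite {a : α // f a = d}] : Finite {x : {a : α // P a} // f x.1 = d} :=
  Finite.of_injective (fun x => (⟨x.1.1, x.2⟩ : {a : α // f a = d}))
    (fun x y hxy => Subtype.ext (Subtype.ext
      (show x.1.1 = y.1.1 from congrArg (fun z : {a : α // f a = d} => z.1) hxy)))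

lemma finite_fiber_expOf {n r : ℕ} (d : Fin (r+1) →₀ ℕ) :
    Finite {Z : Fin n → Seq (r+1) // expOf Z = d} := by
  apply finite_pi_of_bound _ (∑ i, d i)
  intro Z hZ j k
  have h1 : ∑ j' : Fin n, Z j' k = d (Fin.rev k) := by
    rw [← hZ]
    show _ = (expOf Z) (Fin.rev k)
    simp only [expOf, Finsupp.coe_equivFunOnFinite_symm, Fin.rev_rev]
  calc Z j k ≤ ∑ j' : Fin n, Z j' k :=
        Finset.single_le_sum (f := fun j' : Fin n => Z j' k)
          (fun _ _ => Nat.zero_le _) (Finset.mem_univ j)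
    _ = d (Fin.rev k) := h1
    _ ≤ ∑ i, d i :=
        Finset.single_le_sum (f := fun i => d i)
          (fun _ _ => Nat.zero_le _) (Finset.mem_univ _)

lemma finite_fiber_expTail {n r : ℕ} (d : Fin (r+1) →₀ ℕ) :
    Finite {S : Fin n → Seq r // expTail S = d} := by
  apply finite_pi_of_bound _ (∑ i, d i)
  intro S hS j k
  have hidx : ((Fin.rev k).castSucc : Fin (r+1)).val < r := by
    have hk := k.isLt
    simp only [Fin.coe_castSucc, Fin.val_rev]
    omega
  have h1 : ∑ j' : Fin n, S j' k = d ((Fin.rev k).castSucc) := by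
    rw [← hS]
    show _ = (expTail S) _
    simp only [expTail, Finsupp.coe_equivFunOnFinite_symm]
    rw [dif_pos hidx]
    have hrev : Fin.rev (⟨((Fin.rev k).castSucc : Fin (r+1)).val, hidx⟩ : Fin r) = k := by
      apply Fin.ext
      have hk := k.isLt
      simp only [Fin.val_rev, Fin.coe_castSucc]
      omega
    rw [hrev]
  calc S j k ≤ ∑ j' : Fin n, S j' k :=
        Finset.single_le_sum (f := fun j' : Fin n => S j' k)
          (fun _ _ => Nat.zero_le _) (Finset.mem_univ j)
    _ = d ((Fin.rev k).castSucc) := h1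
    _ ≤ ∑ i, d i :=
        Finset.single_le_sum (f := fun i => d i)
          (fun _ _ => Nat.zero_le _) (Finset.mem_univ _)

lemma finite_fiber_single {st : Type*} {k : ℕ} (x0 : st) (w : (Fin k → ℕ) → ℕ)
    (hw : ∀ a i, a i ≤ w a) (d : st →₀ ℕ) :
    Finite {a : Fin k → ℕ // Finsupp.single x0 (w a) = d} := by
  apply finite_fun_of_bound _ (d x0)
  intro a ha i
  have hwa : w a = d x0 := by
    rw [← ha]
    simp
  exact hwa ▸ hw a i

/-! ### partitions with at most `k` parts -/

def W (k : ℕ) (a : Fin k → ℕ) : ℕ := ∑ j, (j.val + 1) * a j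

lemma W_succ (k : ℕ) (a : Fin (k+1) → ℕ) :
    W (k+1) a = W k (Fin.init a) + (k+1) * a (Fin.last k) := by
  unfold W
  rw [Fin.sum_univ_castSucc]
  simp [Fin.init]

lemma W_ge {k : ℕ} (a : Fin k → ℕ) (i : Fin k) : a i ≤ W k a :=
  le_trans (Nat.le_mul_of_pos_left (a i) (Nat.succ_pos i.val))
    (Finset.single_le_sum (f := fun j : Fin k => (j.val + 1) * a j)
      (fun _ _ => Nat.zero_le _) (Finset.mem_univ i))

def qsplit (k : ℕ) (P : ℕ → Prop) :
    {a : Fin (k+1) → ℕ // P (W (k+1) a)} ≃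
      ({b : Fin k → ℕ // P (W k b)} ⊕ {a : Fin (k+1) → ℕ // P ((k+1) + W (k+1) a)}) where
  toFun x :=
    if h : x.1 (Fin.last k) = 0 then
      Sum.inl ⟨Fin.init x.1, by
        have h2 := x.2
        rwa [W_succ, h, Nat.mul_zero, Nat.add_zero] at h2⟩
    else
      Sum.inr ⟨Function.update x.1 (Fin.last k) (x.1 (Fin.last k) - 1), by
        have h2 := x.2
        have harith : ∀ (w v : ℕ), v ≠ 0 → (k+1) + (w + (k+1)*(v-1)) = w + (k+1)*v := by
          intro w v hv
          obtain ⟨m, rfl⟩ := Nat.exists_eq_succ_of_ne_zero hv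
          rw [Nat.succ_sub_one, Nat.mul_succ]
          ring
        rw [W_succ, Fin.init_update_last, Function.update_self, harith _ _ h]
        rwa [W_succ] at h2⟩
  invFun y :=
    match y with
    | Sum.inl ⟨b, hb⟩ => ⟨Fin.snoc b 0, by
        rw [W_succ, Fin.init_snoc, Fin.snoc_last, Nat.mul_zero, Nat.add_zero]
        exact hb⟩
    | Sum.inr ⟨a, ha⟩ => ⟨Function.update a (Fin.last k) (a (Fin.last k) + 1), by
        rw [W_succ, Fin.init_update_last, Function.update_self]
        rw [W_succ] at ha
        have he : W k (Fin.init a) + (k+1) * (a (Fin.last k) + 1)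
            = (k+1) + (W k (Fin.init a) + (k+1) * a (Fin.last k)) := by
          rw [Nat.mul_succ]
          ring
        rw [he]
        exact ha⟩
  left_inv := by
    rintro ⟨a, ha⟩
    by_cases h : a (Fin.last k) = 0
    · simp only [dif_pos h]
      apply Subtype.ext
      show Fin.snoc (Fin.init a) 0 = a
      funext j
      refine Fin.lastCases ?_ ?_ j
      · rw [Fin.snoc_last, h]
      · intro i
        rw [Fin.snoc_castSucc]
        rfl
    · simp only [dif_neg h]
      apply Subtype.ext
      show Function.update (Function.update a (Fin.last k) (a (Fin.last k) - 1)) (Fin.last k)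
          ((Function.update a (Fin.last k) (a (Fin.last k) - 1)) (Fin.last k) + 1) = a
      rw [Function.update_self, Function.update_idem,
        (by omega : a (Fin.last k) - 1 + 1 = a (Fin.last k)), Function.update_eq_self]
  right_inv := by
    rintro (⟨b, hb⟩ | ⟨a, ha⟩)
    · have h0 : (Fin.snoc b 0 : Fin (k+1) → ℕ) (Fin.last k) = 0 := by simp
      dsimp only
      rw [dif_pos h0]
      have hinit : Fin.init (Fin.snoc b 0 : Fin (k+1) → ℕ) = b := by simp
      exact congrArg Sum.inl (Subtype.ext hinit)
    · have h0 : (Function.update a (Fin.last k) (a (Fin.last k) + 1)) (Fin.last k) ≠ 0 := by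
        rw [Function.update_self]
        exact Nat.succ_ne_zero _
      dsimp only
      rw [dif_neg h0]
      refine congrArg Sum.inr (Subtype.ext ?_)
      show Function.update (Function.update a (Fin.last k) (a (Fin.last k) + 1)) (Fin.last k)
          ((Function.update a (Fin.last k) (a (Fin.last k) + 1)) (Fin.last k) - 1) = a
      rw [Function.update_self, Function.update_idem, Nat.add_sub_cancel,
        Function.update_eq_self]

def Qs {st : Type*} (x0 : st) (k : ℕ) : MvPowerSeries st ℤ :=
  cnt (fun a : Fin k → ℕ => Finsupp.single x0 (W k a))

lemma qrec {st : Type*} (x0 : st) (k : ℕ) :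
    Qs x0 (k+1) = Qs x0 k
      + (MvPowerSeries.X x0 : MvPowerSeries st ℤ) ^ (k+1) * Qs x0 (k+1) := by
  unfold Qs
  rw [MvPowerSeries.X_pow_eq, monomial_mul_cnt]
  have he : (fun a : Fin (k+1) → ℕ =>
        Finsupp.single x0 (k+1) + Finsupp.single x0 (W (k+1) a))
      = fun a : Fin (k+1) → ℕ => Finsupp.single x0 ((k+1) + W (k+1) a) := by
    funext a
    rw [← Finsupp.single_add]
  rw [he]
  exact cnt_add_split _ _ _
    (fun d => qsplit k (fun m => Finsupp.single x0 m = d))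
    (fun d => finite_fiber_single x0 (W k) W_ge d)
    (fun d => finite_fiber_single x0 (fun a => (k+1) + W (k+1) a)
      (fun a i => le_trans (W_ge a i) (Nat.le_add_left _ _)) d)

lemma poch_Qs {st : Type*} (x0 : st) (k : ℕ) :
    (∏ j ∈ Finset.Icc 1 k, (1 - (MvPowerSeries.X x0 : MvPowerSeries st ℤ) ^ j))
      * Qs x0 k = 1 := by
  induction k with
  | zero =>
    rw [Finset.Icc_eq_empty (by omega : ¬ (1:ℕ) ≤ 0), Finset.prod_empty, one_mul]
    have hq : Qs x0 0 = cnt (fun _ : Fin 0 → ℕ => (0 : st →₀ ℕ)) := by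
      unfold Qs
      exact congrArg _ (funext fun a => by simp [W])
    rw [hq, cnt_one]
  | succ k ih =>
    rw [Finset.prod_Icc_succ_top (by omega : 1 ≤ k + 1)]
    have h2 : (1 - (MvPowerSeries.X x0 : MvPowerSeries st ℤ) ^ (k+1)) * Qs x0 (k+1)
        = Qs x0 k := by
      rw [sub_mul, one_mul]
      nth_rewrite 1 [qrec x0 k]
      ring
    rw [mul_assoc, h2]
    exact ih

/-! ### head sequences and partitions -/

def psum {n : ℕ} (a : Fin n → ℕ) (t : Fin n) : ℕ :=
  ∑ s ∈ Finset.univ.filter (fun s : Fin n => s ≤ t), a s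

def dcnt (D : Finset ℕ) (t : ℕ) : ℕ := (D ∩ Finset.Icc 1 t).card

def hOf {n : ℕ} (D : Finset ℕ) (a : Fin n → ℕ) : Fin n → ℕ :=
  fun t => psum a t + dcnt D t.val

def ainv {n : ℕ} (D : Finset ℕ) (h : Fin n → ℕ) : Fin n → ℕ := fun t =>
  if t.val = 0 then h t
  else h t - h ⟨t.val - 1, lt_of_le_of_lt (Nat.sub_le _ _) t.isLt⟩
    - (if t.val ∈ D then 1 else 0)

lemma dcnt_eq_sum (D : Finset ℕ) (t : ℕ) :
    dcnt D t = ∑ p ∈ D, (if 1 ≤ p ∧ p ≤ t then 1 else 0) := by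
  classical
  unfold dcnt
  rw [← Finset.filter_mem_eq_inter, Finset.card_filter]
  exact Finset.sum_congr rfl fun p _ => by simp [Finset.mem_Icc]

lemma dcnt_succ (D : Finset ℕ) (t : ℕ) :
    dcnt D (t+1) = dcnt D t + (if t+1 ∈ D then 1 else 0) := by
  classical
  rw [dcnt_eq_sum, dcnt_eq_sum,
    show (if t+1 ∈ D then (1:ℕ) else 0) = ∑ p ∈ D, (if p = t+1 then 1 else 0) from
      (Finset.sum_ite_eq' D (t+1) (fun _ => (1:ℕ))).symm,
    ← Finset.sum_add_distrib]
  exact Finset.sum_congr rfl fun p _ => by split_ifs <;> omega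

lemma psum_succ {n : ℕ} (a : Fin n → ℕ) {u v : Fin n} (huv : u.val + 1 = v.val) :
    psum a v = psum a u + a v := by
  unfold psum
  have hins : Finset.univ.filter (fun s : Fin n => s ≤ v)
      = insert v (Finset.univ.filter (fun s : Fin n => s ≤ u)) := by
    ext s
    simp only [Finset.mem_filter, Finset.mem_univ, true_and, Finset.mem_insert,
      Fin.le_def, Fin.ext_iff]
    omega
  rw [hins, Finset.sum_insert (by
    simp only [Finset.mem_filter, Finset.mem_univ, true_and, Fin.le_def]
    omega)]
  rw [Nat.add_comm]

lemma psum_eq_zero_val {n : ℕ} (a : Fin n → ℕ) {t : Fin n} (h0 : t.val = 0) :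
    psum a t = a t := by
  unfold psum
  have hs : Finset.univ.filter (fun s : Fin n => s ≤ t) = {t} := by
    ext s
    simp only [Finset.mem_filter, Finset.mem_univ, true_and, Finset.mem_singleton,
      Fin.le_def, Fin.ext_iff]
    omega
  rw [hs, Finset.sum_singleton]

lemma hOf_cond {n : ℕ} (D : Finset ℕ) (a : Fin n → ℕ) : HeadCond n D (hOf D a) := by
  intro i h1 h2
  show psum a ⟨i, h1⟩ + dcnt D i + (if i + 1 ∈ D then 1 else 0)
    ≤ psum a ⟨i+1, h2⟩ + dcnt D (i+1)
  rw [psum_succ a (u := ⟨i, h1⟩) (v := ⟨i+1, h2⟩) rfl, dcnt_succ]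
  split_ifs <;> omega

lemma hOf_inj {n : ℕ} (D : Finset ℕ) : Function.Injective (hOf (n := n) D) := by
  intro a b hab
  have hps : ∀ t : Fin n, psum a t = psum b t := fun t => by
    have h := congrFun hab t
    unfold hOf at h
    omega
  funext t
  rcases Nat.eq_zero_or_pos t.val with h0 | hpos
  · have h := hps t
    rw [psum_eq_zero_val a h0, psum_eq_zero_val b h0] at h
    exact h
  · have hm : t.val - 1 < n := lt_of_le_of_lt (Nat.sub_le _ _) t.isLt
    have huv : (⟨t.val - 1, hm⟩ : Fin n).val + 1 = t.val := by
      show t.val - 1 + 1 = t.val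
      omega
    have h := hps t
    rw [psum_succ a huv, psum_succ b huv, hps ⟨t.val - 1, hm⟩] at h
    omega

lemma hOf_surj {n : ℕ} (D : Finset ℕ) (h : Fin n → ℕ) (hc : HeadCond n D h) :
    hOf D (ainv D h) = h := by
  funext t
  suffices key : ∀ m (hmn : m < n), psum (ainv D h) ⟨m, hmn⟩ + dcnt D m = h ⟨m, hmn⟩ by
    exact key t.val t.isLt
  intro m
  induction m with
  | zero =>
    intro hmn
    rw [psum_eq_zero_val (ainv D h) (show ((⟨0, hmn⟩ : Fin n)).val = 0 from rfl)]
    have hd0 : dcnt D 0 = 0 := by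
      unfold dcnt
      rw [Finset.Icc_eq_empty (by omega : ¬ (1:ℕ) ≤ 0)]
      simp
    rw [hd0, Nat.add_zero]
    show (if ((⟨0, hmn⟩ : Fin n)).val = 0 then _ else _) = _
    rw [if_pos rfl]
  | succ m ih =>
    intro hmn
    have hm : m < n := by omega
    rw [psum_succ (ainv D h) (u := ⟨m, hm⟩) (v := ⟨m+1, hmn⟩) rfl, dcnt_succ]
    have hIH := ih hm
    have hstep := hc m hm hmn
    have hval : ainv D h ⟨m+1, hmn⟩
        = h ⟨m+1, hmn⟩ - h ⟨m, hm⟩ - (if m+1 ∈ D then 1 else 0) := by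
      show (if ((⟨m+1, hmn⟩ : Fin n)).val = 0 then _ else _) = _
      rw [if_neg (Nat.succ_ne_zero m)]
      rfl
    rw [hval]
    by_cases hD : m + 1 ∈ D <;> simp only [hD, if_true, if_false] at hstep ⊢ <;> omega

lemma card_filter_ge {n : ℕ} (p : ℕ) :
    (Finset.univ.filter (fun t : Fin n => p ≤ t.val)).card = n - p := by
  rw [← Fintype.card_subtype]
  have e : {t : Fin n // p ≤ t.val} ≃ Fin (n - p) :=
    { toFun := fun t => ⟨t.1.val - p, by have h1 := t.1.isLt; have h2 := t.2; omega⟩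
      invFun := fun m => ⟨⟨m.val + p, by have := m.isLt; omega⟩, by
        show p ≤ m.val + p
        omega⟩
      left_inv := fun t => by
        apply Subtype.ext
        apply Fin.ext
        show t.1.val - p + p = t.1.val
        have := t.2
        omega
      right_inv := fun m => by
        apply Fin.ext
        show m.val + p - p = m.val
        omega }
  rw [Fintype.card_congr e, Fintype.card_fin]

lemma sum_ite_le {n : ℕ} (p : ℕ) :
    (∑ t : Fin n, if p ≤ t.val then (1:ℕ) else 0) = n - p := by
  rw [← card_filter_ge (n := n) p, Finset.card_filter]

lemma sum_hOf {n : ℕ} (D : Finset ℕ) (hD : D ⊆ Finset.Icc 1 (n-1)) (hn : 1 ≤ n)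
    (a : Fin n → ℕ) :
    ∑ t, hOf D a t = (∑ i ∈ D, (n - i)) + ∑ s : Fin n, (n - s.val) * a s := by
  unfold hOf
  rw [Finset.sum_add_distrib]
  have h1 : ∑ t : Fin n, psum a t = ∑ s : Fin n, (n - s.val) * a s := by
    unfold psum
    simp only [Finset.sum_filter]
    rw [Finset.sum_comm]
    refine Finset.sum_congr rfl fun s _ => ?_
    have hterm : ∀ t : Fin n, (if s ≤ t then a s else 0)
        = (if s.val ≤ t.val then (1:ℕ) else 0) * a s := fun t => by
      simp only [Fin.le_def]
      split_ifs <;> simp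
    rw [Finset.sum_congr rfl fun t _ => hterm t, ← Finset.sum_mul, sum_ite_le]
  have h2 : ∑ t : Fin n, dcnt D t.val = ∑ p ∈ D, (n - p) := by
    rw [Finset.sum_congr rfl fun t (_ : t ∈ Finset.univ) => dcnt_eq_sum D t.val]
    rw [Finset.sum_comm]
    refine Finset.sum_congr rfl fun p hp => ?_
    have hp1 : 1 ≤ p := (Finset.mem_Icc.mp (hD hp)).1
    have hterm : ∀ t : Fin n, (if 1 ≤ p ∧ p ≤ t.val then (1:ℕ) else 0)
        = (if p ≤ t.val then (1:ℕ) else 0) := fun t => by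
      split_ifs <;> omega
    rw [Finset.sum_congr rfl fun t _ => hterm t, sum_ite_le]
  rw [h1, h2, Nat.add_comm]

def revE (n : ℕ) : (Fin n → ℕ) ≃ (Fin n → ℕ) :=
  { toFun := fun a j => a (Fin.rev j)
    invFun := fun a j => a (Fin.rev j)
    left_inv := fun a => by funext j; simp [Fin.rev_rev]
    right_inv := fun a => by funext j; simp [Fin.rev_rev] }

lemma W_rev {n : ℕ} (a : Fin n → ℕ) :
    W n (fun j => a (Fin.rev j)) = ∑ s : Fin n, (n - s.val) * a s := by
  unfold W
  have h1 : ∀ j : Fin n, (j.val + 1) * a (Fin.rev j)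
      = (fun s : Fin n => (n - s.val) * a s) (Fin.revPerm j) := fun j => by
    show (j.val + 1) * a (Fin.rev j) = (n - (Fin.rev j).val) * a (Fin.rev j)
    have hj := j.isLt
    congr 1
    rw [Fin.val_rev]
    omega
  rw [Finset.sum_congr rfl fun j _ => h1 j]
  exact Equiv.sum_comp Fin.revPerm (fun s : Fin n => (n - s.val) * a s)

/-! ### the Z-side decomposition -/

lemma expOf_decomp {n r : ℕ} (Z : Fin n → Seq (r+1)) :
    expOf Z = expTail (tailS Z) + Finsupp.single (Fin.last r) (∑ v, Z v 0) := by
  apply Finsupp.ext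
  intro i
  rw [Finsupp.add_apply]
  simp only [expOf, expTail, Finsupp.coe_equivFunOnFinite_symm]
  by_cases h : i.val < r
  · rw [dif_pos h, Finsupp.single_apply,
      if_neg (fun he : Fin.last r = i => by
        have := congrArg Fin.val he
        simp only [Fin.val_last] at this
        omega),
      add_zero]
    have hrev : Fin.rev i = Fin.succ (Fin.rev (⟨i.val, h⟩ : Fin r)) := by
      apply Fin.ext
      simp only [Fin.val_rev, Fin.val_succ]
      omega
    rw [hrev]
    rfl
  · have hlast : i = Fin.last r := by
      apply Fin.ext
      have := i.isLt
      simp only [Fin.val_last]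
      omega
    subst hlast
    rw [dif_neg h, Finsupp.single_eq_same]
    have h0 : Fin.rev (Fin.last r) = 0 := by
      apply Fin.ext
      simp [Fin.val_rev]
    rw [h0, Nat.zero_add]

def zEquiv {n r : ℕ} (hn : 1 ≤ n) (R D : Finset ℕ) (σ : Equiv.Perm (Fin n)) :
    {Z : Fin n → Seq (r+1) // IsReading R Z σ ∧ DesSet R (tailS Z) σ = D}
      ≃ ({S : Fin n → Seq r // DesSet R S σ = D} × {h : Fin n → ℕ // HeadCond n D h}) where
  toFun x := (⟨tailS x.1, ((core_iff hn R D σ x.1).mp x.2).1⟩,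
    ⟨heads σ x.1, ((core_iff hn R D σ x.1).mp x.2).2⟩)
  invFun y := ⟨fun v => Fin.cons (y.2.1 (σ.symm v)) (y.1.1 v), by
    apply (core_iff hn R D σ _).mpr
    have ht : tailS (fun v => Fin.cons (y.2.1 (σ.symm v)) (y.1.1 v)) = y.1.1 := by
      funext v k
      simp [tailS, Fin.cons_succ]
    have hh : heads σ (fun v => Fin.cons (y.2.1 (σ.symm v)) (y.1.1 v)) = y.2.1 := by
      funext t
      simp [heads, Fin.cons_zero]
    rw [ht, hh]
    exact ⟨y.1.2, y.2.2⟩⟩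
  left_inv := fun x => by
    apply Subtype.ext
    funext v
    funext k
    refine Fin.cases ?_ ?_ k
    · simp [heads, Fin.cons_zero, Equiv.apply_symm_apply]
    · intro k
      simp [tailS, Fin.cons_succ]
  right_inv := fun y => by
    refine Prod.ext ?_ ?_
    · apply Subtype.ext
      funext v k
      simp [tailS, Fin.cons_succ]
    · apply Subtype.ext
      funext t
      simp [heads, Fin.cons_zero]


/-- **Proposition (the general proposition).**  In `r+1` variables `q_1, …, q_{r+1}`
(so "`q_r`" of the paper is the last variable), for `R, D ⊆ {1, …, n−1}` and `σ ∈ S_n`: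
`(q_{r+1};q_{r+1})_n ⬝ ∑_{Z ∈ (ℕ^{r+1})^n, σ_R(Z) = σ, Des_{R,Z⁽²⁾}(σ) = D} q^Z
  = q_{r+1}^{c(D)} ⬝ ∑_{S ∈ (ℕ^r)^n, Des_{R,S}(σ) = D} q^S`. -/
theorem general_proposition (n r : ℕ) (hn : 1 ≤ n)
    (R D : Finset ℕ) (hR : R ⊆ Finset.Icc 1 (n-1)) (hD : D ⊆ Finset.Icc 1 (n-1))
    (σ : Equiv.Perm (Fin n)) :
    pochOne n (Fin.last r) *
      countSeries (fun Z : Fin n → Seq (r+1) =>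
        IsReading R Z σ ∧ DesSet R (tailS Z) σ = D) =
    MvPowerSeries.monomial (R := ℤ) (Finsupp.single (Fin.last r) (∑ i ∈ D, (n - i))) 1 *
      countSeriesP (α := Fin n → Seq r)
        (fun S d => DesSet R S σ = D ∧ expTail S = d) := by
  classical
  have eL : countSeries (fun Z : Fin n → Seq (r+1) =>
        IsReading R Z σ ∧ DesSet R (tailS Z) σ = D)
      = cnt (fun x : {Z : Fin n → Seq (r+1) //
          IsReading R Z σ ∧ DesSet R (tailS Z) σ = D} => expOf x.1) :=
    countSeriesP_eq_cnt _ _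
  have eR : countSeriesP (α := Fin n → Seq r) (fun S d => DesSet R S σ = D ∧ expTail S = d)
      = cnt (fun x : {S : Fin n → Seq r // DesSet R S σ = D} => expTail x.1) :=
    countSeriesP_eq_cnt _ _
  rw [eL, eR]
  have hfinF : ∀ d : Fin (r+1) →₀ ℕ,
      Finite {x : {S : Fin n → Seq r // DesSet R S σ = D} // expTail x.1 = d} :=
    fun d => @finite_fiber_sub _ _ _ _ d (finite_fiber_expTail d)
  have hfinG : ∀ d : Fin (r+1) →₀ ℕ,
      Finite {x : {h : Fin n → ℕ // HeadCond n D h} //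
        Finsupp.single (Fin.last r) (∑ t, x.1 t) = d} :=
    fun d => @finite_fiber_sub _ _ _ _ d
      (finite_fiber_single (Fin.last r) (fun h : Fin n → ℕ => ∑ t, h t)
        (fun a i => Finset.single_le_sum (f := fun t : Fin n => a t)
          (fun _ _ => Nat.zero_le _) (Finset.mem_univ i)) d)
  have h1 : cnt (fun x : {Z : Fin n → Seq (r+1) //
          IsReading R Z σ ∧ DesSet R (tailS Z) σ = D} => expOf x.1)
      = cnt (fun xS : {S : Fin n → Seq r // DesSet R S σ = D} => expTail xS.1)
        * cnt (fun xh : {h : Fin n → ℕ // HeadCond n D h} =>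
            Finsupp.single (Fin.last r) (∑ t, xh.1 t)) := by
    rw [cnt_mul_cnt _ _ hfinF hfinG]
    refine cnt_congr (zEquiv hn R D σ) _ _ (fun x => ?_)
    show expTail (tailS x.1) + Finsupp.single (Fin.last r) (∑ t, x.1 (σ t) 0) = expOf x.1
    rw [expOf_decomp x.1, Equiv.sum_comp σ (fun v => x.1 v 0)]
  have hbij : Function.Bijective
      (fun a : Fin n → ℕ =>
        (⟨hOf D a, hOf_cond D a⟩ : {h : Fin n → ℕ // HeadCond n D h})) := by
    constructor
    · intro a b hab
      exact hOf_inj D (congrArg Subtype.val hab)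
    · rintro ⟨h, hc⟩
      exact ⟨ainv D h, Subtype.ext (hOf_surj D h hc)⟩
  have hG : cnt (fun xh : {h : Fin n → ℕ // HeadCond n D h} =>
        Finsupp.single (Fin.last r) (∑ t, xh.1 t))
      = MvPowerSeries.monomial (R := ℤ) (Finsupp.single (Fin.last r) (∑ i ∈ D, (n - i))) 1
        * Qs (Fin.last r) n := by
    have e1 : cnt (fun a : Fin n → ℕ =>
          Finsupp.single (Fin.last r) ((∑ i ∈ D, (n - i)) + ∑ s : Fin n, (n - s.val) * a s))
        = cnt (fun xh : {h : Fin n → ℕ // HeadCond n D h} =>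
            Finsupp.single (Fin.last r) (∑ t, xh.1 t)) := by
      refine cnt_congr (Equiv.ofBijective _ hbij) _ _ (fun a => ?_)
      show Finsupp.single (Fin.last r) (∑ t, hOf D a t) = _
      rw [sum_hOf D hD hn a]
    rw [← e1]
    have e2 : (fun a : Fin n → ℕ =>
          Finsupp.single (Fin.last r) ((∑ i ∈ D, (n - i)) + ∑ s : Fin n, (n - s.val) * a s))
        = fun a : Fin n → ℕ =>
          Finsupp.single (Fin.last r) (∑ i ∈ D, (n - i))
            + Finsupp.single (Fin.last r) (∑ s : Fin n, (n - s.val) * a s) := by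
      funext a
      rw [← Finsupp.single_add]
    have e3 := monomial_mul_cnt (Finsupp.single (Fin.last r) (∑ i ∈ D, (n - i)))
      (fun a : Fin n → ℕ => Finsupp.single (Fin.last r) (∑ s : Fin n, (n - s.val) * a s))
    rw [e2, ← e3]
    congr 1
    show cnt (fun a : Fin n → ℕ =>
        Finsupp.single (Fin.last r) (∑ s : Fin n, (n - s.val) * a s))
      = cnt (fun b : Fin n → ℕ => Finsupp.single (Fin.last r) (W n b))
    refine cnt_congr (revE n) _ _ (fun a => ?_)
    show Finsupp.single (Fin.last r) (W n (fun j => a (Fin.rev j))) = _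
    rw [W_rev]
  rw [h1, hG]
  have hP : pochOne n (Fin.last r) * Qs (Fin.last r) n = 1 := poch_Qs (Fin.last r) n
  set F := cnt (fun xS : {S : Fin n → Seq r // DesSet R S σ = D} => expTail xS.1) with hF
  set M := MvPowerSeries.monomial (R := ℤ) (Finsupp.single (Fin.last r) (∑ i ∈ D, (n - i))) 1
    with hM
  linear_combination (M * F) * hP

end

end RomeroComaj
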